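/- Let X_1,…,X_n be independent random variables with values in a measurable space (𝒳,𝒜), let ε_1,…,ε_n be i.i.d. Rademacher random variables independent of (X_1,…,X_n), and let ℱ be a countable class of measurable functions on 𝒳 with values in [0,1]. Then E[Z̄(ℱ)] ≤ ∫_0^1 E[ sup_{C ∈ 𝒞_u(ℱ)} |Σ_{i=1}^n ε_i 1_C(X_i)| ] du, where 𝒞_u(ℱ) = {{x ∈ 𝒳 : f(x) > u} : f ∈ ℱ}. -/

import Mathlib

open MeasureTheory ProbabilityTheory Real Set

/-- The class `𝒞ᵤ(F)` of level sets `{x : f(x) > u}` for `f ∈ F`. -/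
def levelSets {𝒳 : Type*} (F : Set (𝒳 → ℝ)) (u : ℝ) : Set (Set 𝒳) :=
  {s | ∃ f ∈ F, s = {x | u < f x}}

lemma ciSup_subtype_eq_sSup_image {α β : Type*} [ConditionallyCompleteLattice α]
    (s : Set β) (f : β → α) : (⨆ a : s, f a) = sSup (f '' s) := by
  rw [iSup, ← Set.image_eq_range]

lemma integral_indicator_Iio_unit {a : ℝ} (ha : a ∈ Icc (0:ℝ) 1) :
    ∫ u in (0:ℝ)..1, (Iio a).indicator (fun _ => (1:ℝ)) u = a := by
  rw [intervalIntegral.integral_of_le zero_le_one,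
    MeasureTheory.integral_indicator measurableSet_Iio,
    Measure.restrict_restrict measurableSet_Iio]
  have h : Iio a ∩ Ioc 0 1 = Ioo 0 a := by
    ext u
    constructor
    · rintro ⟨h1, h2, _⟩; exact ⟨h2, h1⟩
    · rintro ⟨h1, h2⟩; exact ⟨h2, h1, le_trans h2.le ha.2⟩
  rw [h, setIntegral_const, smul_eq_mul, mul_one, Real.volume_real_Ioo,
    max_eq_left (by linarith [ha.1])]
  ring

/-- **Key inequality in the proof of Theorems 1 and 2**: `X₁, …, Xₙ` are independent
random variables with values in `𝒳`, `ε₁, …, εₙ` are i.i.d. Rademacher variables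
independent of `(X₁, …, Xₙ)`, and `F` is a countable class of measurable `[0,1]`-valued
functions on `𝒳`. Then
`E[Z̄(F)] ≤ ∫₀¹ E[sup_{C ∈ 𝒞ᵤ(F)} |∑ᵢ εᵢ 1_C(Xᵢ)|] du`. -/
theorem expectation_sup_rademacher_layer_bound
    {Ω 𝒳 : Type*} [MeasurableSpace Ω] [MeasurableSpace 𝒳]
    (P : Measure Ω) [IsProbabilityMeasure P]
    (n : ℕ) (X : Fin n → Ω → 𝒳)
    (hXmeas : ∀ i, Measurable (X i))
    (hXindep : iIndepFun X P)
    (ε : Fin n → Ω → ℝ)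
    (hεmeas : ∀ i, Measurable (ε i))
    (hεindep : iIndepFun ε P)
    (hεRad : ∀ i, P {ω | ε i ω = 1} = 1/2 ∧ P {ω | ε i ω = -1} = 1/2)
    (hεX : IndepFun (fun ω i => ε i ω) (fun ω i => X i ω) P)
    (F : Set (𝒳 → ℝ)) (hFc : F.Countable) (hFne : F.Nonempty)
    (hFmeas : ∀ f ∈ F, Measurable f)
    (hFrange : ∀ f ∈ F, ∀ x, f x ∈ Icc (0:ℝ) 1) :
    ∫ ω, (⨆ f : F, |∑ i, ε i ω * (f : 𝒳 → ℝ) (X i ω)|) ∂P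
      ≤ ∫ u in (0:ℝ)..(1:ℝ),
          ∫ ω, (⨆ C : levelSets F u,
            |∑ i, ε i ω * Set.indicator (C : Set 𝒳) (fun _ => (1:ℝ)) (X i ω)|) ∂P := by
  haveI : Countable F := hFc.to_subtype
  haveI : Nonempty F := hFne.to_subtype
  -- the summand processes
  set S : (𝒳 → ℝ) → ℝ → Ω → ℝ :=
    fun f u ω => ∑ i, ε i ω * (Iio (f (X i ω))).indicator (fun _ => (1:ℝ)) u with hSdef
  set G : ℝ → Ω → ℝ := fun u ω => ⨆ f : F, |S f u ω| with hGdef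
  -- basic bounds
  have hind_le : ∀ (a u : ℝ), |(Iio a).indicator (fun _ => (1:ℝ)) u| ≤ 1 := by
    intro a u
    rw [Set.indicator_apply]
    split <;> simp
  have hBdd : ∀ u ω (f : 𝒳 → ℝ), |S f u ω| ≤ ∑ i, |ε i ω| := by
    intro u ω f
    calc |S f u ω| ≤ ∑ i, |ε i ω * (Iio (f (X i ω))).indicator (fun _ => (1:ℝ)) u| :=
          Finset.abs_sum_le_sum_abs _ _
      _ ≤ ∑ i, |ε i ω| := by
          refine Finset.sum_le_sum fun i _ => ?_
          rw [abs_mul]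
          exact mul_le_of_le_one_right (abs_nonneg _) (hind_le _ _)
  have hBddAbove : ∀ u ω, BddAbove (Set.range fun f : F => |S f u ω|) := by
    intro u ω
    exact ⟨∑ i, |ε i ω|, by rintro x ⟨f, rfl⟩; exact hBdd u ω f⟩
  have hGnonneg : ∀ u ω, 0 ≤ G u ω := by
    intro u ω
    obtain ⟨f, hf⟩ := hFne
    exact le_trans (abs_nonneg (S f u ω)) (le_ciSup (hBddAbove u ω) ⟨f, hf⟩)
  have hGle : ∀ u ω, G u ω ≤ ∑ i, |ε i ω| := fun u ω => ciSup_le fun f => hBdd u ω f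
  -- measurability in u
  have hSmeas_u : ∀ (f : 𝒳 → ℝ) ω, Measurable fun u => S f u ω := by
    intro f ω
    refine Finset.measurable_sum _ fun i _ => ?_
    exact (measurable_const.indicator measurableSet_Iio).const_mul _
  have hGmeas_u : ∀ ω, Measurable fun u => G u ω :=
    fun ω => Measurable.iSup fun f => (hSmeas_u f ω).abs
  -- interval integrability
  have hSint : ∀ (f : 𝒳 → ℝ) ω, IntervalIntegrable (fun u => S f u ω) volume 0 1 := by
    intro f ω
    rw [intervalIntegrable_iff_integrableOn_Ioc_of_le zero_le_one]
    refine Integrable.mono' (integrable_const (∑ i, |ε i ω|))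
      (hSmeas_u f ω).aestronglyMeasurable.restrict (ae_of_all _ fun u => ?_)
    rw [Real.norm_eq_abs]
    exact hBdd u ω f
  have hGint : ∀ ω, IntervalIntegrable (fun u => G u ω) volume 0 1 := by
    intro ω
    rw [intervalIntegrable_iff_integrableOn_Ioc_of_le zero_le_one]
    refine Integrable.mono' (integrable_const (∑ i, |ε i ω|))
      (hGmeas_u ω).aestronglyMeasurable.restrict (ae_of_all _ fun u => ?_)
    rw [Real.norm_eq_abs, abs_of_nonneg (hGnonneg u ω)]
    exact hGle u ω
  -- Step 2: pointwise layer-cake bound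
  have step2 : ∀ ω, (⨆ f : F, |∑ i, ε i ω * (f : 𝒳 → ℝ) (X i ω)|)
      ≤ ∫ u in (0:ℝ)..1, G u ω := by
    intro ω
    refine ciSup_le fun f => ?_
    have heq : ∑ i, ε i ω * (f : 𝒳 → ℝ) (X i ω) = ∫ u in (0:ℝ)..1, S f u ω := by
      rw [hSdef]
      rw [intervalIntegral.integral_finset_sum (fun i _ => by
        rw [intervalIntegrable_iff_integrableOn_Ioc_of_le zero_le_one]
        exact ((integrable_const (1:ℝ)).indicator measurableSet_Iio).const_mul _)]
      refine Finset.sum_congr rfl fun i _ => ?_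
      rw [intervalIntegral.integral_const_mul,
        integral_indicator_Iio_unit (hFrange f f.2 (X i ω))]
    rw [heq]
    calc |∫ u in (0:ℝ)..1, S f u ω| ≤ ∫ u in (0:ℝ)..1, |S f u ω| :=
          intervalIntegral.abs_integral_le_integral_abs zero_le_one
      _ ≤ ∫ u in (0:ℝ)..1, G u ω := by
          refine intervalIntegral.integral_mono_on zero_le_one ((hSint f ω).abs) (hGint ω)
            fun u _ => le_ciSup (hBddAbove u ω) f
  -- Step 1: identify the level-set supremum with G
  have hrw : ∀ u ω, (⨆ C : levelSets F u,
      |∑ i, ε i ω * Set.indicator (C : Set 𝒳) (fun _ => (1:ℝ)) (X i ω)|) = G u ω := by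
    intro u ω
    have himg : levelSets F u = (fun f : 𝒳 → ℝ => {x | u < f x}) '' F := by
      ext s
      simp only [levelSets, Set.mem_setOf_eq, Set.mem_image, eq_comm]
    set h : Set 𝒳 → ℝ :=
      fun C => |∑ i, ε i ω * Set.indicator C (fun _ => (1:ℝ)) (X i ω)| with hh
    have hterm : ∀ f : 𝒳 → ℝ, h {x | u < f x} = |S f u ω| := by
      intro f
      have hi : ∀ i : Fin n, Set.indicator {x | u < f x} (fun _ => (1:ℝ)) (X i ω)
          = (Iio (f (X i ω))).indicator (fun _ => (1:ℝ)) u := by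
        intro i
        simp [Set.indicator_apply, Set.mem_setOf_eq, Set.mem_Iio]
      simp only [hh, hSdef, hi]
    have e1 : (⨆ C : levelSets F u, h C) = sSup (h '' levelSets F u) :=
      ciSup_subtype_eq_sSup_image (levelSets F u) h
    have e2 : (⨆ f : F, |S (f : 𝒳 → ℝ) u ω|)
        = sSup ((fun f : 𝒳 → ℝ => |S f u ω|) '' F) :=
      ciSup_subtype_eq_sSup_image F (fun f : 𝒳 → ℝ => |S f u ω|)
    have himgeq : (fun f : 𝒳 → ℝ => h {x | u < f x}) '' F
        = (fun f : 𝒳 → ℝ => |S f u ω|) '' F := Set.image_congr fun f _ => hterm f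
    calc (⨆ C : levelSets F u, h C) = sSup (h '' levelSets F u) := e1
      _ = sSup ((fun f : 𝒳 → ℝ => |S f u ω|) '' F) := by
          rw [himg, Set.image_image, himgeq]
      _ = G u ω := e2.symm
  -- a.e. bound ∑ |ε i ω| = n
  have haeSum : ∀ᵐ ω ∂P, (∑ i, |ε i ω|) = n := by
    have h1 : ∀ i : Fin n, ∀ᵐ ω ∂P, |ε i ω| = 1 := by
      intro i
      obtain ⟨hp1, hp2⟩ := hεRad i
      have hm1 : MeasurableSet {ω | ε i ω = 1} := hεmeas i (measurableSet_singleton 1)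
      have hm2 : MeasurableSet {ω | ε i ω = -1} := hεmeas i (measurableSet_singleton (-1))
      have hd : Disjoint {ω | ε i ω = 1} {ω | ε i ω = -1} := by
        rw [Set.disjoint_left]
        intro ω hx hy
        simp only [Set.mem_setOf_eq] at hx hy
        rw [hx] at hy; norm_num at hy
      have hu : P ({ω | ε i ω = 1} ∪ {ω | ε i ω = -1}) = 1 := by
        rw [measure_union hd hm2, hp1, hp2, one_div, ENNReal.inv_two_add_inv_two]
      have hc : P ({ω | ε i ω = 1} ∪ {ω | ε i ω = -1})ᶜ = 0 := by
        rw [measure_compl (hm1.union hm2) (measure_ne_top _ _), hu, measure_univ, tsub_self]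
      have : ∀ᵐ ω ∂P, ω ∈ {ω | ε i ω = 1} ∪ {ω | ε i ω = -1} := by
        rw [ae_iff]
        convert hc using 2
        rfl
      filter_upwards [this] with ω hω
      rcases hω with h | h <;> simp only [Set.mem_setOf_eq] at h <;> rw [h] <;> norm_num
    filter_upwards [(ae_all_iff).2 h1] with ω hω
    simp [hω]
  -- joint measurability
  have hgmeas : Measurable fun p : ℝ × Ω => G p.1 p.2 := by
    refine Measurable.iSup fun f => Measurable.abs ?_
    refine Finset.measurable_sum _ fun i _ => ?_
    have hset : MeasurableSet {p : ℝ × Ω | p.1 < (f : 𝒳 → ℝ) (X i p.2)} :=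
      measurableSet_lt measurable_fst ((hFmeas f f.2).comp ((hXmeas i).comp measurable_snd))
    have hind : (fun p : ℝ × Ω => (Iio ((f : 𝒳 → ℝ) (X i p.2))).indicator (fun _ => (1:ℝ)) p.1)
        = Set.indicator {p : ℝ × Ω | p.1 < (f : 𝒳 → ℝ) (X i p.2)} (fun _ => (1:ℝ)) := by
      funext p
      simp [Set.indicator_apply, Set.mem_Iio, Set.mem_setOf_eq]
    exact ((hεmeas i).comp measurable_snd).mul
      (hind ▸ (measurable_const.indicator hset) : Measurable fun p : ℝ × Ω =>
        (Iio ((f : 𝒳 → ℝ) (X i p.2))).indicator (fun _ => (1:ℝ)) p.1)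
  set μ := volume.restrict (Ioc (0:ℝ) 1) with hμdef
  haveI : IsFiniteMeasure μ :=
    ⟨by rw [hμdef, Measure.restrict_apply_univ]; exact measure_Ioc_lt_top⟩
  -- integrability of the joint function
  have hgint : Integrable (fun p : ℝ × Ω => G p.1 p.2) (μ.prod P) := by
    refine Integrable.mono' (integrable_const (n : ℝ)) hgmeas.aestronglyMeasurable ?_
    have hA : MeasurableSet {ω | (∑ i, |ε i ω|) = n} := by
      have : Measurable fun ω => ∑ i, |ε i ω| :=
        Finset.measurable_sum _ fun i _ => (hεmeas i).abs
      exact this (measurableSet_singleton _)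
    have hnull : (μ.prod P) {p : ℝ × Ω | ¬ (∑ i, |ε i p.2|) = n} = 0 := by
      have hsub : {p : ℝ × Ω | ¬ (∑ i, |ε i p.2|) = n}
          ⊆ (univ : Set ℝ) ×ˢ {ω | (∑ i, |ε i ω|) = n}ᶜ := by
        rintro ⟨u, ω⟩ h
        exact ⟨trivial, h⟩
      refine measure_mono_null hsub ?_
      rw [Measure.prod_prod]
      have : P {ω | (∑ i, |ε i ω|) = n}ᶜ = 0 := by
        rw [Set.compl_setOf]
        exact ae_iff.1 haeSum
      rw [this, mul_zero]
    have : ∀ᵐ p ∂(μ.prod P), (∑ i, |ε i p.2|) = n := by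
      rw [ae_iff]; exact hnull
    filter_upwards [this] with p hp
    rw [Real.norm_eq_abs, abs_of_nonneg (hGnonneg p.1 p.2)]
    calc G p.1 p.2 ≤ ∑ i, |ε i p.2| := hGle p.1 p.2
      _ = n := hp
  have hswap := MeasureTheory.integral_integral_swap (f := fun u ω => G u ω)
    (μ := μ) (ν := P) hgint
  have hintP : Integrable (fun ω => ∫ u, G u ω ∂μ) P := hgint.integral_prod_right
  -- assemble
  have hinterval : ∀ ω, (∫ u in (0:ℝ)..1, G u ω) = ∫ u, G u ω ∂μ := by
    intro ω
    rw [intervalIntegral.integral_of_le zero_le_one]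
  calc ∫ ω, (⨆ f : F, |∑ i, ε i ω * (f : 𝒳 → ℝ) (X i ω)|) ∂P
      ≤ ∫ ω, (∫ u, G u ω ∂μ) ∂P := by
        refine integral_mono_of_nonneg (ae_of_all _ fun ω => ?_) hintP
          (ae_of_all _ fun ω => ?_)
        · obtain ⟨f, hf⟩ := hFne
          have hb : BddAbove (Set.range fun f : F => |∑ i, ε i ω * (f : 𝒳 → ℝ) (X i ω)|) := by
            refine ⟨∑ i, |ε i ω|, ?_⟩
            rintro x ⟨g, rfl⟩
            calc |∑ i, ε i ω * (g : 𝒳 → ℝ) (X i ω)|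
                ≤ ∑ i, |ε i ω * (g : 𝒳 → ℝ) (X i ω)| := Finset.abs_sum_le_sum_abs _ _
              _ ≤ ∑ i, |ε i ω| := by
                  refine Finset.sum_le_sum fun i _ => ?_
                  rw [abs_mul]
                  refine mul_le_of_le_one_right (abs_nonneg _) ?_
                  have := hFrange g g.2 (X i ω)
                  rw [abs_le]
                  constructor <;> linarith [this.1, this.2]
          exact le_trans (abs_nonneg _) (le_ciSup hb ⟨f, hf⟩)
        · dsimp only
          rw [← hinterval ω]
          exact step2 ω
    _ = ∫ u, (∫ ω, G u ω ∂P) ∂μ := hswap.symm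
    _ = ∫ u in (0:ℝ)..1, ∫ ω, G u ω ∂P := by
        rw [intervalIntegral.integral_of_le zero_le_one]
    _ = ∫ u in (0:ℝ)..(1:ℝ), ∫ ω, (⨆ C : levelSets F u,
          |∑ i, ε i ω * Set.indicator (C : Set 𝒳) (fun _ => (1:ℝ)) (X i ω)|) ∂P := by
        refine intervalIntegral.integral_congr fun u _ => ?_
        exact integral_congr_ae (ae_of_all _ fun ω => (hrw u ω).symm)
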